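/- Consider a system of linear inequalities in variables x_1,…,x_N over ℝ consisting of inequalities of the form a_m · x_{i_m} ≤ x_{j_m} + x_{k_m} for m = 1,…,M with each a_m ≥ 2, together with x_i > 0 for all i. Define a digraph D on vertex set {1,…,N} where each inequality a·x_α ≤ x_β + x_γ contributes edges (α,β) and (α,γ). If D is strongly connected, then the system is feasible if and only if a_1 = a_2 = ⋯ = a_M = 2, and in that case every feasible solution satisfies x_1 = x_2 = ⋯ = x_N. -/
import Mathlib


theorem stmt_3 (N M : ℕ) (hN : 0 < N) (hM : 0 < M)
    (a : Fin M → ℝ) (ha : ∀ m, 2 ≤ a m) (i j k : Fin M → Fin N)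
    (hconn : ∀ α β : Fin N,
      Relation.ReflTransGen (fun α β => ∃ m, i m = α ∧ (j m = β ∨ k m = β)) α β) :
    ((∃ x : Fin N → ℝ, (∀ n, 0 < x n) ∧ ∀ m, a m * x (i m) ≤ x (j m) + x (k m)) ↔
      ∀ m, a m = 2) ∧
    (∀ x : Fin N → ℝ,
      ((∀ n, 0 < x n) ∧ ∀ m, a m * x (i m) ≤ x (j m) + x (k m)) →
      ∀ n n', x n = x n') := by
  have key : ∀ x : Fin N → ℝ, (∀ n, 0 < x n) →
      (∀ m, a m * x (i m) ≤ x (j m) + x (k m)) →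
      (∀ n n', x n = x n') ∧ ∀ m, a m = 2 := by
    intro x hpos hineq
    haveI : Nonempty (Fin N) := Fin.pos_iff_nonempty.mp hN
    obtain ⟨α₀, hα₀⟩ := Finite.exists_max x
    have hconst : ∀ β, x β = x α₀ := by
      intro β
      induction hconn α₀ β with
      | refl => rfl
      | @tail b c _ hedge ih =>
        obtain ⟨m, him, hjk⟩ := hedge
        have hxi : x (i m) = x α₀ := by rw [him, ih]
        have h1 : a m * x (i m) ≤ x (j m) + x (k m) := hineq m
        have h2 : 2 * x α₀ ≤ a m * x (i m) := by
          rw [hxi]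
          exact mul_le_mul_of_nonneg_right (ha m) (hpos α₀).le
        have hj := hα₀ (j m)
        have hk := hα₀ (k m)
        rcases hjk with h | h <;> rw [← h] <;> linarith
    have ha2 : ∀ m, a m = 2 := by
      intro m
      have h1 := hineq m
      rw [hconst (i m), hconst (j m), hconst (k m)] at h1
      have hc := hpos α₀
      nlinarith [ha m]
    exact ⟨fun n n' => by rw [hconst n, hconst n'], ha2⟩
  constructor
  · constructor
    · rintro ⟨x, hpos, hineq⟩
      exact (key x hpos hineq).2
    · intro ha2
      refine ⟨fun _ => 1, fun _ => one_pos, fun m => by rw [ha2 m]; norm_num⟩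
  · rintro x ⟨hpos, hineq⟩
    exact (key x hpos hineq).1
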